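/- arXiv:2003.14236 — 5 statements merged into one kernel-verified Lean document; each statement's English description precedes it below -/
import Mathlib

section
/- The polynomial G_m = sum over j from 0 to m-1 of (x_1+y_1)···(x_1+y_j)·(x_2+y_{j+2})···(x_2+y_m) is symmetric under exchanging x_1 and x_2. -/
private lemma step {R : Type*} [CommRing R] (m : ℕ) (a b : R) (y : ℕ → R) :
    (∑ j ∈ Finset.range (m + 1),
        (∏ i ∈ Finset.Icc 1 j, (a + y i)) * ∏ i ∈ Finset.Icc (j + 2) (m + 1), (b + y i))
    = (b + y (m + 1)) * (∑ j ∈ Finset.range m,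
        (∏ i ∈ Finset.Icc 1 j, (a + y i)) * ∏ i ∈ Finset.Icc (j + 2) m, (b + y i))
      + ∏ i ∈ Finset.Icc 1 m, (a + y i) := by
  rw [Finset.sum_range_succ]
  have h1 : Finset.Icc (m + 2) (m + 1) = ∅ := Finset.Icc_eq_empty (by omega)
  rw [h1, Finset.prod_empty, mul_one, Finset.mul_sum]
  congr 1
  apply Finset.sum_congr rfl
  intro j hj
  have hj' : j + 2 ≤ m + 1 := by
    have := Finset.mem_range.mp hj; omega
  rw [Finset.prod_Icc_succ_top hj']
  ring

private lemma tel {R : Type*} [CommRing R] (m : ℕ) (x₁ x₂ : R) (y : ℕ → R) :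
    (x₁ - x₂) * (∑ j ∈ Finset.range m,
        (∏ i ∈ Finset.Icc 1 j, (x₁ + y i)) * ∏ i ∈ Finset.Icc (j + 2) m, (x₂ + y i))
    = (∏ i ∈ Finset.Icc 1 m, (x₁ + y i)) - ∏ i ∈ Finset.Icc 1 m, (x₂ + y i) := by
  induction m with
  | zero => simp
  | succ n ih =>
    rw [step, Finset.prod_Icc_succ_top (Nat.le_add_left 1 n),
      Finset.prod_Icc_succ_top (Nat.le_add_left 1 n)]
    linear_combination (x₂ + y (n + 1)) * ih

/-- The polynomial `G_m = ∑_{j=0}^{m-1} (x_1+y_1)⋯(x_1+y_j)·(x_2+y_{j+2})⋯(x_2+y_m)` is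
symmetric under exchanging `x_1` and `x_2`. -/
theorem stmt1 {R : Type*} [CommRing R] (m : ℕ) (x₁ x₂ : R) (y : ℕ → R) :
    (∑ j ∈ Finset.range m,
        (∏ i ∈ Finset.Icc 1 j, (x₁ + y i)) * ∏ i ∈ Finset.Icc (j + 2) m, (x₂ + y i))
    = ∑ j ∈ Finset.range m,
        (∏ i ∈ Finset.Icc 1 j, (x₂ + y i)) * ∏ i ∈ Finset.Icc (j + 2) m, (x₁ + y i) := by
  induction m with
  | zero => simp
  | succ n ih =>
    rw [step, step, ih]
    have := tel n x₂ x₁ y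
    linear_combination this
end

section
/- Let A = (2,1) and B = (1,m) with m ≥ 1, and consider all lattice paths γ from A to B in the 2×m grid using steps Up (decreasing the first coordinate) and Right (increasing the second coordinate). Define F_m(x_1, x_2 | y_1, ..., y_m) as the sum over such paths γ of the product over cells (i,j) on γ of 1/(x_i + y_j). Then F_m is a symmetric function of x_1 and x_2 (as a rational function in x_1, x_2, y_1, ..., y_m). -/
open Finset

noncomputable section

/-- The field of rational functions over `ℚ` in variables `x_1, x_2, …` and `y_1, y_2, …`. -/
abbrev K : Type := FractionRing (MvPolynomial (ℕ ⊕ ℕ) ℚ)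

/-- The variable `x_i` as an element of `K`. -/
def X (i : ℕ) : K := algebraMap (MvPolynomial (ℕ ⊕ ℕ) ℚ) K (MvPolynomial.X (Sum.inl i))

/-- The variable `y_j` as an element of `K`. -/
def Y (j : ℕ) : K := algebraMap (MvPolynomial (ℕ ⊕ ℕ) ℚ) K (MvPolynomial.X (Sum.inr j))

/-- A step of an Up-Right lattice path: `Up` decreases the first (row) coordinate by one,
`Right` increases the second (column) coordinate by one. -/
def Step (c d : ℕ × ℕ) : Prop :=
  (d.1 + 1 = c.1 ∧ d.2 = c.2) ∨ (d.1 = c.1 ∧ d.2 = c.2 + 1)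

/-- `p` is an Up-Right lattice path from cell `A` to cell `B` (listed as its sequence of
visited cells, starting at `A` and ending at `B`). -/
def IsPath (A B : ℕ × ℕ) (p : List (ℕ × ℕ)) : Prop :=
  p.Chain' Step ∧ p.head? = some A ∧ p.getLast? = some B

/-- All cells of `p` lie in the grid `{1,…,m} × {1,…,n}`. -/
def InGrid (m n : ℕ) (p : List (ℕ × ℕ)) : Prop :=
  ∀ c ∈ p, 1 ≤ c.1 ∧ c.1 ≤ m ∧ 1 ≤ c.2 ∧ c.2 ≤ n

/-- The weight of a path: the product of `1/(x_i + y_j)` over all visited cells `(i,j)`. -/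
def pathWeight (x y : ℕ → K) (p : List (ℕ × ℕ)) : K :=
  (p.map fun c => (x c.1 + y c.2)⁻¹).prod

/-- The single-path partition function: the sum of weights of all Up-Right lattice paths
from `A` to `B` inside the grid `{1,…,m} × {1,…,n}`. -/
def F1 (m n : ℕ) (x y : ℕ → K) (A B : ℕ × ℕ) : K :=
  ∑ᶠ p : {p : List (ℕ × ℕ) // IsPath A B p ∧ InGrid m n p}, pathWeight x y p.1

/-- `γ` is a `k`-tuple of pairwise vertex-disjoint Up-Right lattice paths `γ i : A i → B i`
inside the grid `{1,…,m} × {1,…,n}`. -/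
def IsTuple (m n k : ℕ) (A B : Fin k → ℕ × ℕ) (γ : Fin k → List (ℕ × ℕ)) : Prop :=
  (∀ i, IsPath (A i) (B i) (γ i) ∧ InGrid m n (γ i)) ∧
  (∀ i j, i ≠ j → ∀ c ∈ γ i, c ∉ γ j)

/-- The multi-path partition function: the sum, over all `k`-tuples of pairwise disjoint
Up-Right lattice paths `γ i : A i → B i` in the grid `{1,…,m} × {1,…,n}`, of the product
of `1/(x_i + y_j)` over all visited cells. -/
def Ftuple (m n k : ℕ) (x y : ℕ → K) (A B : Fin k → ℕ × ℕ) : K :=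
  ∑ᶠ γ : {γ : Fin k → List (ℕ × ℕ) // IsTuple m n k A B γ}, ∏ i, pathWeight x y (γ.1 i)



set_option maxHeartbeats 1000000

lemma XY_ne (i a : ℕ) : X i + Y a ≠ 0 := by
  have h : (MvPolynomial.X (Sum.inl i) + MvPolynomial.X (Sum.inr a) : MvPolynomial (ℕ ⊕ ℕ) ℚ) ≠ 0 := by
    intro h
    have := congrArg (MvPolynomial.eval (fun s => if s = Sum.inl i then (1:ℚ) else 0)) h
    simp at this
  intro h0
  apply h
  apply IsFractionRing.injective (MvPolynomial (ℕ ⊕ ℕ) ℚ) K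
  simpa [X, Y, map_add] using h0

lemma X_ne : X 1 ≠ X 2 := by
  intro h
  have := IsFractionRing.injective (MvPolynomial (ℕ ⊕ ℕ) ℚ) K h
  have := MvPolynomial.X_injective this
  simp at this

def plist (M c j : ℕ) : List (ℕ × ℕ) :=
  ((List.range' c (j+1-c)).map fun a => (2,a)) ++ ((List.range' j (M+1-j)).map fun a => (1,a))

lemma step_mono : ∀ (p : List (ℕ × ℕ)), p.Chain' Step → ∀ a b, p.head? = some a →
    p.getLast? = some b → b.1 ≤ a.1 ∧ a.2 ≤ b.2
  | [] => by simp
  | [a] => by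
    intro _ a' b' ha hb
    simp at ha hb
    subst ha; subst hb; omega
  | a :: q :: t => by
    intro hch a' b' ha hb
    rw [List.Chain', List.isChain_cons_cons] at hch
    simp only [List.head?_cons, Option.some.injEq] at ha
    subst ha
    have hb' : (q :: t).getLast? = some b' := by rwa [List.getLast?_cons_cons] at hb
    have ih := step_mono (q :: t) hch.2 q b' rfl hb'
    rcases hch.1 with ⟨h1, h2⟩ | ⟨h1, h2⟩ <;> omega

lemma row1_char : ∀ (p : List (ℕ × ℕ)), p.Chain' Step → ∀ c M, p.head? = some (1,c) →
    p.getLast? = some (1,M) → c ≤ M ∧ p = (List.range' c (M+1-c)).map fun a => (1,a)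
  | [] => by simp
  | [a] => by
    intro _ c M ha hb
    simp at ha hb
    subst ha
    have hcM : c = M := by simpa using hb
    subst hcM
    refine ⟨le_refl _, ?_⟩
    have h1 : c + 1 - c = 1 := by omega
    rw [h1]
    simp
  | a :: q :: t => by
    intro hch c' M ha hb
    rw [List.Chain', List.isChain_cons_cons] at hch
    simp only [List.head?_cons, Option.some.injEq] at ha
    subst ha
    have hb' : (q :: t).getLast? = some (1, M) := by rwa [List.getLast?_cons_cons] at hb
    rcases hch.1 with ⟨h1, h2⟩ | ⟨h1, h2⟩
    · exfalso
      have := (step_mono (q :: t) hch.2 q (1, M) rfl hb').1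
      omega
    · obtain ⟨q1, q2⟩ := q
      simp only at h1 h2
      subst h1; subst h2
      have ih := row1_char ((1, c'+1) :: t) hch.2 (c'+1) M rfl hb'
      refine ⟨by omega, ?_⟩
      have h3 : M + 1 - c' = (M + 1 - (c'+1)) + 1 := by omega
      rw [h3, List.range'_succ, List.map_cons, ← ih.2]

lemma path_char : ∀ (p : List (ℕ × ℕ)), p.Chain' Step → ∀ c M, p.head? = some (2,c) →
    p.getLast? = some (1,M) → ∃ j, c ≤ j ∧ j ≤ M ∧ p = plist M c j
  | [] => by simp
  | [a] => by
    intro _ c M ha hb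
    simp at ha hb
    subst ha
    simp at hb
  | a :: q :: t => by
    intro hch c M ha hb
    rw [List.Chain', List.isChain_cons_cons] at hch
    simp only [List.head?_cons, Option.some.injEq] at ha
    subst ha
    have hb' : (q :: t).getLast? = some (1, M) := by rwa [List.getLast?_cons_cons] at hb
    obtain ⟨q1, q2⟩ := q
    rcases hch.1 with ⟨h1, h2⟩ | ⟨h1, h2⟩
    · -- Up step: q = (1, c)
      simp only at h1 h2
      have hq1 : q1 = 1 := by omega
      subst hq1
      obtain rfl := h2.symm
      have ih := row1_char ((1, c) :: t) hch.2 c M rfl hb'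
      refine ⟨c, le_refl _, ih.1, ?_⟩
      rw [plist]
      have h3 : c + 1 - c = 1 := by omega
      rw [h3, ← ih.2]
      simp
    · -- Right step: q = (2, c+1)
      simp only at h1 h2
      subst h1; subst h2
      obtain ⟨j, hj1, hj2, hj3⟩ := path_char ((2, c+1) :: t) hch.2 (c+1) M rfl hb'
      refine ⟨j, by omega, hj2, ?_⟩
      rw [plist, hj3, plist]
      have h3 : j + 1 - c = (j + 1 - (c+1)) + 1 := by omega
      rw [h3, List.range'_succ, List.map_cons, List.cons_append]

lemma plist_isPath (M c j : ℕ) (h1 : 1 ≤ c) (hcj : c ≤ j) (hjM : j ≤ M) :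
    IsPath (2, c) (1, M) (plist M c j) ∧ InGrid 2 M (plist M c j) := by
  constructor
  · refine ⟨?_, ?_, ?_⟩
    · rw [plist, List.Chain', List.isChain_append]
      refine ⟨?_, ?_, ?_⟩
      · rw [List.isChain_map]
        have : ∀ s n : ℕ, List.Chain' (fun a b => Step (2, a) (2, b)) (List.range' s n) := by
          intro s n
          induction n generalizing s with
          | zero => simp [List.Chain']
          | succ n ihn =>
            rw [List.range'_succ]
            cases n with
            | zero => simp [List.Chain']
            | succ n =>
              rw [List.range'_succ, List.Chain', List.isChain_cons_cons]
              exact ⟨Or.inr ⟨rfl, rfl⟩, by rw [← List.range'_succ]; exact ihn (s+1)⟩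
        exact this c (j+1-c)
      · rw [List.isChain_map]
        have : ∀ s n : ℕ, List.Chain' (fun a b => Step (1, a) (1, b)) (List.range' s n) := by
          intro s n
          induction n generalizing s with
          | zero => simp [List.Chain']
          | succ n ihn =>
            rw [List.range'_succ]
            cases n with
            | zero => simp [List.Chain']
            | succ n =>
              rw [List.range'_succ, List.Chain', List.isChain_cons_cons]
              exact ⟨Or.inr ⟨rfl, rfl⟩, by rw [← List.range'_succ]; exact ihn (s+1)⟩
        exact this j (M+1-j)
      · intro x hx y hy
        have hxl : x = (2, j) := by
          have h3 : j + 1 - c = (j - c) + 1 := by omega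
          rw [h3, List.range'_concat] at hx
          simp at hx
          have : c + (j - c) = j := by omega
          rw [this] at hx
          exact hx.symm
        have hyl : y = (1, j) := by
          have h3 : M + 1 - j = (M - j) + 1 := by omega
          rw [h3, List.range'_succ] at hy
          simp at hy
          exact hy.symm
        rw [hxl, hyl]
        exact Or.inl ⟨rfl, rfl⟩
    · rw [plist]
      have h3 : j + 1 - c = (j - c) + 1 := by omega
      rw [h3, List.range'_succ]
      simp
    · rw [plist]
      have h3 : M + 1 - j = (M - j) + 1 := by omega
      rw [h3, List.range'_concat]
      have h4 : j + 1 * (M - j) = M := by omega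
      rw [h4]
      simp
  · intro cc hcc
    rw [plist] at hcc
    simp only [List.mem_append, List.mem_map, List.mem_range'] at hcc
    rcases hcc with ⟨aa, ⟨i, hi, rfl⟩, rfl⟩ | ⟨aa, ⟨i, hi, rfl⟩, rfl⟩ <;> simp <;> omega

/-- product of f over [s, s+n) -/
def lwp (f : ℕ → K) (s n : ℕ) : K := ((List.range' s n).map f).prod

lemma lwp_concat (f : ℕ → K) (s n : ℕ) : lwp f s (n+1) = lwp f s n * f (s + n) := by
  simp [lwp, List.range'_concat]

lemma key (u v : K) (y : ℕ → K) (hu : ∀ a, u + y a ≠ 0) (hv : ∀ a, v + y a ≠ 0) (M : ℕ) :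
    (u - v) * ∑ j ∈ Icc 1 M, lwp (fun a => (v + y a)⁻¹) 1 j * lwp (fun a => (u + y a)⁻¹) j (M+1-j)
      = lwp (fun a => (v + y a)⁻¹) 1 M - lwp (fun a => (u + y a)⁻¹) 1 M := by
  induction M with
  | zero => simp [lwp]
  | succ M ih =>
    have hins : Icc 1 (M+1) = insert (M+1) (Icc 1 M) := by
      ext k; simp only [Finset.mem_Icc, Finset.mem_insert]; omega
    rw [hins, Finset.sum_insert (by simp)]
    have hsum : ∑ j ∈ Icc 1 M, lwp (fun a => (v + y a)⁻¹) 1 j * lwp (fun a => (u + y a)⁻¹) j (M+1+1-j)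
        = (∑ j ∈ Icc 1 M, lwp (fun a => (v + y a)⁻¹) 1 j * lwp (fun a => (u + y a)⁻¹) j (M+1-j)) * (u + y (M+1))⁻¹ := by
      rw [Finset.sum_mul]
      apply Finset.sum_congr rfl
      intro j hj
      simp only [Finset.mem_Icc] at hj
      have h1 : M+1+1-j = (M+1-j)+1 := by omega
      have h2 : j + (M+1-j) = M+1 := by omega
      rw [h1, lwp_concat, h2, mul_assoc]
    rw [hsum]
    have hterm : lwp (fun a => (u + y a)⁻¹) (M+1) (M+1+1-(M+1)) = (u + y (M+1))⁻¹ := by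
      have : M+1+1-(M+1) = 1 := by omega
      rw [this]; simp [lwp]
    rw [hterm]
    rw [lwp_concat (fun a => (v + y a)⁻¹) 1 M, lwp_concat (fun a => (u + y a)⁻¹) 1 M]
    have h1M : 1 + M = M + 1 := by omega
    rw [h1M]
    set a := lwp (fun a => (v + y a)⁻¹) 1 M
    set b := lwp (fun a => (u + y a)⁻¹) 1 M
    have hA := hu (M+1)
    have hB := hv (M+1)
    -- goal: (u-v) * ((a * B⁻¹) * A⁻¹ + S * A⁻¹) = a * B⁻¹ - b * A⁻¹ with (u-v)*S = a - b
    have expand : (u - v) * (a * (v + y (M+1))⁻¹ * (u + y (M+1))⁻¹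
        + (∑ j ∈ Icc 1 M, lwp (fun a => (v + y a)⁻¹) 1 j * lwp (fun a => (u + y a)⁻¹) j (M+1-j)) * (u + y (M+1))⁻¹)
        = (u - v) * a * (v + y (M+1))⁻¹ * (u + y (M+1))⁻¹
          + ((u - v) * ∑ j ∈ Icc 1 M, lwp (fun a => (v + y a)⁻¹) 1 j * lwp (fun a => (u + y a)⁻¹) j (M+1-j)) * (u + y (M+1))⁻¹ := by ring
    rw [expand, ih]
    have huv : u - v = (u + y (M+1)) - (v + y (M+1)) := by ring
    rw [huv]
    set A := u + y (M+1)
    set B := v + y (M+1)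
    have e1 : (A - B) * a * B⁻¹ * A⁻¹ = a * B⁻¹ * (A * A⁻¹) - a * (B * B⁻¹) * A⁻¹ := by ring
    rw [e1, mul_inv_cancel₀ hA, mul_inv_cancel₀ hB]
    ring


lemma mem2_plist (M j a : ℕ) (hj : 1 ≤ j) : ((2:ℕ), a) ∈ plist M 1 j ↔ 1 ≤ a ∧ a ≤ j := by
  simp only [plist, List.mem_append, List.mem_map, List.mem_range', Prod.mk.injEq]
  constructor
  · rintro (⟨b, ⟨i, hi, rfl⟩, -, rfl⟩ | ⟨b, ⟨i, hi, rfl⟩, h2, rfl⟩)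
    · omega
    · omega
  · rintro ⟨h1, h2⟩
    left
    refine ⟨a, ⟨a - 1, by omega, by omega⟩, ?_⟩
    simp

lemma plist_inj (m j j' : ℕ) (h1 : 1 ≤ j) (h1' : 1 ≤ j')
    (h : plist m 1 j = plist m 1 j') : j = j' := by
  have a1 : ((2:ℕ), j) ∈ plist m 1 j' := by rw [← h]; exact (mem2_plist m j j h1).2 ⟨h1, le_rfl⟩
  have a2 : ((2:ℕ), j') ∈ plist m 1 j := by rw [h]; exact (mem2_plist m j' j' h1').2 ⟨h1', le_rfl⟩
  have b1 := (mem2_plist m j' j h1').1 a1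
  have b2 := (mem2_plist m j j' h1).1 a2
  omega

lemma pmap_bij (m : ℕ) :
    Function.Bijective (fun j : {j : ℕ // j ∈ Icc 1 m} =>
      (⟨plist m 1 j.1, by
        obtain ⟨hj1, hj2⟩ := Finset.mem_Icc.1 j.2
        exact plist_isPath m 1 j.1 le_rfl hj1 hj2⟩ :
        {p : List (ℕ × ℕ) // IsPath (2,1) (1,m) p ∧ InGrid 2 m p})) := by
  constructor
  · intro j j' h
    have := congrArg Subtype.val h
    simp only at this
    exact Subtype.ext (plist_inj m j.1 j'.1 (Finset.mem_Icc.1 j.2).1 (Finset.mem_Icc.1 j'.2).1 this)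
  · rintro ⟨p, ⟨hch, hh, hl⟩, hg⟩
    obtain ⟨j, hj1, hj2, hj3⟩ := path_char p hch 1 m hh hl
    exact ⟨⟨j, Finset.mem_Icc.2 ⟨hj1, hj2⟩⟩, Subtype.ext hj3.symm⟩

lemma weight_plist (x : ℕ → K) (m j : ℕ) :
    pathWeight x Y (plist m 1 j) =
      lwp (fun a => (x 2 + Y a)⁻¹) 1 j * lwp (fun a => (x 1 + Y a)⁻¹) j (m+1-j) := by
  have h1 : j + 1 - 1 = j := by omega
  simp only [pathWeight, plist, h1, List.map_append, List.prod_append, List.map_map, lwp]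
  rfl

lemma F1_eq (m : ℕ) (x : ℕ → K) :
    F1 2 m x Y (2,1) (1,m) =
      ∑ j ∈ Icc 1 m, lwp (fun a => (x 2 + Y a)⁻¹) 1 j * lwp (fun a => (x 1 + Y a)⁻¹) j (m+1-j) := by
  set S := {p : List (ℕ × ℕ) // IsPath (2,1) (1,m) p ∧ InGrid 2 m p}
  let e : {j : ℕ // j ∈ Icc 1 m} ≃ S := Equiv.ofBijective _ (pmap_bij m)
  haveI : Fintype S := Fintype.ofEquiv _ e
  rw [F1, finsum_eq_sum_of_fintype]
  rw [← Equiv.sum_comp e (fun p : S => pathWeight x Y p.1)]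
  have step : ∀ j : {j : ℕ // j ∈ Icc 1 m},
      pathWeight x Y ((e j).1) =
        lwp (fun a => (x 2 + Y a)⁻¹) 1 j.1 * lwp (fun a => (x 1 + Y a)⁻¹) j.1 (m+1-j.1) := by
    intro j
    have : (e j).1 = plist m 1 j.1 := rfl
    rw [this, weight_plist]
  rw [Finset.sum_congr rfl (fun j _ => step j)]
  exact Finset.sum_coe_sort (Icc 1 m)
    (fun j => lwp (fun a => (x 2 + Y a)⁻¹) 1 j * lwp (fun a => (x 1 + Y a)⁻¹) j (m+1-j))

/-- `F_m(x_1,x_2 | y_1,…,y_m)`, the weighted sum over Up-Right lattice paths from `(2,1)`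
to `(1,m)` in the grid `{1,2} × {1,…,m}` of `∏ 1/(x_i+y_j)` over visited cells, is
symmetric in `x_1` and `x_2`. -/
theorem stmt2 (m : ℕ) (hm : 1 ≤ m) :
    F1 2 m (fun i => X (Equiv.swap 1 2 i)) Y (2, 1) (1, m) = F1 2 m X Y (2, 1) (1, m) := by
  rw [F1_eq m (fun i => X (Equiv.swap 1 2 i)), F1_eq m X]
  simp only [Equiv.swap_apply_left, Equiv.swap_apply_right]
  have h12 := key (X 1) (X 2) Y (fun a => XY_ne 1 a) (fun a => XY_ne 2 a) m
  have h21 := key (X 2) (X 1) Y (fun a => XY_ne 2 a) (fun a => XY_ne 1 a) m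
  have hne : X 1 - X 2 ≠ 0 := sub_ne_zero.2 X_ne
  apply mul_left_cancel₀ hne
  linear_combination -h12 - h21
end
end

section
/- With F_m(x_1,x_2 | y_1,...,y_m) the weighted sum over Up-Right lattice paths from (2,1) to (1,m) of the product of 1/(x_i+y_j) over visited cells, one has the closed formula F_m = [(x_1+y_1)···(x_1+y_m) − (x_2+y_1)···(x_2+y_m)] / [(x_1−x_2) · ∏_{i=1}^{2} ∏_{j=1}^{m} (x_i+y_j)]. -/
open Finset

set_option maxHeartbeats 1000000

noncomputable section

/-! ### Auxiliary material -/

/-- The canonical path through `(2,1),…,(2,j),(1,j),…,(1,m)`. -/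
def Pth (m j : ℕ) : List (ℕ × ℕ) :=
  ((List.range' 1 j).map fun t => (2,t)) ++ ((List.range' j (m+1-j)).map fun t => (1,t))

lemma rowOne (m : ℕ) : ∀ p : List (ℕ × ℕ), ∀ c, p.Chain' Step → p.head? = some (1,c) →
    p.getLast? = some (1,m) → InGrid 2 m p →
    p = (List.range' c (m+1-c)).map fun t => (1,t) := by
  intro p
  induction p with
  | nil => intro c _ h; simp at h
  | cons a q ih =>
    intro c hch hhd hlast hgrid
    simp only [List.head?_cons, Option.some_inj] at hhd
    subst hhd
    cases q with
    | nil =>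
      simp only [List.getLast?_singleton, Option.some_inj, Prod.mk.injEq] at hlast
      obtain ⟨-, rfl⟩ := hlast
      rw [show c+1-c = 1 from by omega]
      simp
    | cons b q' =>
      simp only [List.Chain', List.isChain_cons_cons] at hch
      have hbg := hgrid b (by simp)
      rw [List.getLast?_cons_cons] at hlast
      rcases hch.1 with ⟨h1, h2⟩ | ⟨h1, h2⟩
      · omega
      · have hb2 : b = (1, c+1) := by rcases b with ⟨b1, b2⟩; simp_all
        subst hb2
        have hcm : c + 1 ≤ m := hbg.2.2.2
        have hq := ih (c+1) hch.2 (by simp) hlast (fun x hx => hgrid x (by simp [hx]))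
        rw [show m+1-c = (m-c)+1 from by omega, List.range'_succ, List.map_cons, hq]
        rw [show m+1-(c+1) = m-c from by omega]

lemma rowTwo (m : ℕ) : ∀ p : List (ℕ × ℕ), ∀ c, p.Chain' Step → p.head? = some (2,c) →
    p.getLast? = some (1,m) → InGrid 2 m p →
    ∃ j, c ≤ j ∧ j ≤ m ∧
      p = (((List.range' c (j+1-c)).map fun t => (2,t)) ++
        ((List.range' j (m+1-j)).map fun t => (1,t))) := by
  intro p
  induction p with
  | nil => intro c _ h; simp at h
  | cons a q ih =>
    intro c hch hhd hlast hgrid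
    simp only [List.head?_cons, Option.some_inj] at hhd
    subst hhd
    cases q with
    | nil =>
      simp only [List.getLast?_singleton, Option.some_inj, Prod.mk.injEq] at hlast
      exact absurd hlast.1 (by norm_num)
    | cons b q' =>
      simp only [List.Chain', List.isChain_cons_cons] at hch
      have hbg := hgrid b (by simp)
      rw [List.getLast?_cons_cons] at hlast
      have hgrid' : InGrid 2 m (b :: q') := fun x hx => hgrid x (by simp [hx])
      rcases hch.1 with ⟨h1, h2⟩ | ⟨h1, h2⟩
      · have hb2 : b = (1, c) := by rcases b with ⟨b1, b2⟩; simp_all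
        subst hb2
        have hcm : c ≤ m := hbg.2.2.2
        have hq := rowOne m _ c hch.2 (by simp) hlast hgrid'
        refine ⟨c, le_refl c, hcm, ?_⟩
        rw [show c+1-c = 1 from by omega]
        simp only [List.range'_one, List.map_cons, List.map_nil, List.cons_append,
          List.nil_append]
        rw [hq]
      · have hb2 : b = (2, c+1) := by rcases b with ⟨b1, b2⟩; simp_all
        subst hb2
        obtain ⟨j, hj1, hj2, hj3⟩ := ih (c+1) hch.2 (by simp) hlast hgrid'
        refine ⟨j, by omega, hj2, ?_⟩
        rw [show j+1-c = (j-c)+1 from by omega, List.range'_succ, List.map_cons,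
          List.cons_append, hj3]
        rw [show j+1-(c+1) = j-c from by omega]

lemma chainRow (r : ℕ) : ∀ n a, List.Chain' Step ((List.range' a n).map fun t => (r,t)) := by
  intro n
  induction n with
  | zero => simp [List.Chain']
  | succ n ih =>
    intro a
    rw [List.range'_succ, List.map_cons]
    refine List.isChain_cons.mpr ⟨?_, ih (a+1)⟩
    intro b hb
    cases n with
    | zero => simp at hb
    | succ k =>
      rw [List.range'_succ, List.map_cons, List.head?_cons, Option.mem_some_iff] at hb
      subst hb
      exact Or.inr ⟨rfl, rfl⟩

lemma getLast?_rangeRow (r : ℕ) (a n : ℕ) :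
    (((List.range' a (n+1)).map fun t => (r,t)).getLast?) = some (r, a+n) := by
  rw [show List.range' a (n+1) = List.range' a n ++ [a + n] from by
      simpa using @List.range'_concat 1 a n,
    List.map_append]
  simp

lemma head?_rangeRow (r : ℕ) (a n : ℕ) :
    (((List.range' a (n+1)).map fun t => (r,t)).head?) = some (r, a) := by
  rw [List.range'_succ, List.map_cons]; rfl

lemma Pth_valid (m j : ℕ) (hj1 : 1 ≤ j) (hjm : j ≤ m) :
    IsPath (2,1) (1,m) (Pth m j) ∧ InGrid 2 m (Pth m j) := by
  obtain ⟨k, rfl⟩ : ∃ k, j = k + 1 := ⟨j - 1, by omega⟩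
  obtain ⟨l, hl⟩ : ∃ l, m + 1 - (k+1) = l + 1 := ⟨m - (k+1), by omega⟩
  constructor
  · refine ⟨?_, ?_, ?_⟩
    · rw [Pth]
      refine List.isChain_append.mpr ⟨chainRow 2 _ _, chainRow 1 _ _, ?_⟩
      intro x hx y hy
      rw [getLast?_rangeRow, Option.mem_some_iff] at hx
      rw [hl, head?_rangeRow, Option.mem_some_iff] at hy
      subst hx; subst hy
      exact Or.inl ⟨rfl, by omega⟩
    · rw [Pth, List.head?_append, head?_rangeRow]
      rfl
    · rw [Pth, List.getLast?_append, hl, getLast?_rangeRow]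
      simp only [Option.some_or, Option.some_inj]
      congr 1
      omega
  · intro c hc
    rw [Pth, List.mem_append] at hc
    rcases hc with hc | hc <;>
    · simp only [List.mem_map, List.mem_range'_1] at hc
      obtain ⟨t, ht, rfl⟩ := hc
      simp only
      omega

lemma mem_Pth_rowOne (m j t : ℕ) : ((1,t) : ℕ × ℕ) ∈ Pth m j ↔ (j ≤ t ∧ t < m+1) := by
  rw [Pth, List.mem_append]
  constructor
  · rintro (h | h) <;> obtain ⟨s, hs, he⟩ := List.mem_map.mp h <;>
      rw [List.mem_range'_1] at hs
    · simp at he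
    · simp only [Prod.mk.injEq, true_and] at he
      subst he; omega
  · intro h
    exact Or.inr (List.mem_map.mpr ⟨t, List.mem_range'_1.mpr (by omega), rfl⟩)

lemma prodRange' (f : ℕ → K) : ∀ n a, ((List.range' a n).map f).prod = ∏ t ∈ Finset.Ico a (a+n), f t := by
  intro n
  induction n with
  | zero => simp
  | succ n ih =>
    intro a
    rw [List.range'_succ, List.map_cons, List.prod_cons, ih,
      show a+(n+1) = a+1+n from by omega,
      Finset.prod_eq_prod_Ico_succ_bot (show a < a+1+n by omega)]

lemma X_add_Y_ne_zero (i j : ℕ) : X i + Y j ≠ 0 := by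
  have h : X i + Y j = algebraMap (MvPolynomial (ℕ ⊕ ℕ) ℚ) K
      (MvPolynomial.X (Sum.inl i) + MvPolynomial.X (Sum.inr j)) := by
    rw [map_add]; rfl
  rw [h, Ne, IsFractionRing.to_map_eq_zero_iff]
  intro hc
  have := congrArg (MvPolynomial.eval (fun _ => (1:ℚ))) hc
  simp at this

lemma X_sub_X_ne_zero : X 1 - X 2 ≠ 0 := by
  have h : X 1 - X 2 = algebraMap (MvPolynomial (ℕ ⊕ ℕ) ℚ) K
      (MvPolynomial.X (Sum.inl 1) - MvPolynomial.X (Sum.inl 2)) := by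
    rw [map_sub]; rfl
  rw [h, Ne, IsFractionRing.to_map_eq_zero_iff]
  intro hc
  have := congrArg (MvPolynomial.eval
    (fun s => if s = Sum.inl 1 then (1:ℚ) else 0)) hc
  simp at this

/-- Closed formula for `F_m`:
`F_m = [(x_1+y_1)⋯(x_1+y_m) − (x_2+y_1)⋯(x_2+y_m)] / [(x_1−x_2)·∏_{i=1}^2∏_{j=1}^m (x_i+y_j)]`. -/
theorem stmt3 (m : ℕ) (hm : 1 ≤ m) :
    F1 2 m X Y (2, 1) (1, m) =
      ((∏ j ∈ Finset.Icc 1 m, (X 1 + Y j)) - ∏ j ∈ Finset.Icc 1 m, (X 2 + Y j)) /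
        ((X 1 - X 2) * ∏ i ∈ Finset.Icc 1 2, ∏ j ∈ Finset.Icc 1 m, (X i + Y j)) := by
  classical
  -- Step 1: identify the index set of paths
  set T := {p : List (ℕ × ℕ) // IsPath (2,1) (1,m) p ∧ InGrid 2 m p} with hT
  have hbij : Function.Bijective (fun j : {j : ℕ // j ∈ Finset.Icc 1 m} =>
      (⟨Pth m j.1, Pth_valid m j.1 (Finset.mem_Icc.mp j.2).1
        (Finset.mem_Icc.mp j.2).2⟩ : T)) := by
    constructor
    · rintro ⟨j, hj⟩ ⟨j', hj'⟩ h
      simp only [Subtype.mk.injEq] at h ⊢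
      simp only [Finset.mem_Icc] at hj hj'
      have h1 : ((1,j) : ℕ × ℕ) ∈ Pth m j' := by
        rw [← h]; exact (mem_Pth_rowOne m j j).mpr ⟨le_refl j, by omega⟩
      have h2 : ((1,j') : ℕ × ℕ) ∈ Pth m j := by
        rw [h]; exact (mem_Pth_rowOne m j' j').mpr ⟨le_refl j', by omega⟩
      rw [mem_Pth_rowOne] at h1 h2
      omega
    · rintro ⟨p, ⟨⟨hch, hhd, hlast⟩, hgrid⟩⟩
      obtain ⟨j, hj1, hj2, hj3⟩ := rowTwo m p 1 hch hhd hlast hgrid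
      refine ⟨⟨j, Finset.mem_Icc.mpr ⟨hj1, hj2⟩⟩, ?_⟩
      simp only [Subtype.mk.injEq, Pth, Nat.add_sub_cancel]
      exact hj3.symm
  -- Step 2: finsum to finite sum
  have h1 : F1 2 m X Y (2,1) (1,m) =
      ∑ j ∈ Finset.Icc 1 m, pathWeight X Y (Pth m j) := by
    rw [F1, ← finsum_eq_of_bijective _ hbij (fun j => rfl),
      finsum_eq_sum_of_fintype, ← Finset.sum_coe_sort (Finset.Icc 1 m)
        (fun j => pathWeight X Y (Pth m j))]
  rw [h1]
  -- Step 3: compute the weight of each path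
  have hw : ∀ j ∈ Finset.Icc 1 m, pathWeight X Y (Pth m j) =
      (∏ t ∈ Finset.Ico 1 (j+1), (X 2 + Y t)⁻¹) *
        ∏ t ∈ Finset.Ico j (m+1), (X 1 + Y t)⁻¹ := by
    intro j hj
    simp only [Finset.mem_Icc] at hj
    rw [pathWeight, Pth, List.map_append, List.prod_append, List.map_map, List.map_map]
    have e1 : ((fun c : ℕ × ℕ => (X c.1 + Y c.2)⁻¹) ∘ fun t => ((2:ℕ),t)) =
        fun t => (X 2 + Y t)⁻¹ := rfl
    have e2 : ((fun c : ℕ × ℕ => (X c.1 + Y c.2)⁻¹) ∘ fun t => ((1:ℕ),t)) =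
        fun t => (X 1 + Y t)⁻¹ := rfl
    rw [e1, e2, prodRange', prodRange',
      show 1 + j = j + 1 from by omega, show j + (m+1-j) = m+1 from by omega]
  rw [Finset.sum_congr rfl hw]
  -- Step 4: algebra
  have hne1 : ∀ a b : ℕ, ∀ s : Finset ℕ, (∏ t ∈ s, (X a + Y t)) ≠ 0 := fun a b s =>
    Finset.prod_ne_zero_iff.mpr fun t _ => X_add_Y_ne_zero a t
  set P1 : K := ∏ t ∈ Finset.Ico 1 (m+1), (X 1 + Y t) with hP1
  set P2 : K := ∏ t ∈ Finset.Ico 1 (m+1), (X 2 + Y t) with hP2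
  set D : K := (X 1 - X 2) * (P1 * P2) with hD
  have hDne : D ≠ 0 := by
    rw [hD]
    exact mul_ne_zero X_sub_X_ne_zero (mul_ne_zero (hne1 1 0 _) (hne1 2 0 _))
  set a : ℕ → K := fun j => (∏ t ∈ Finset.Ico 1 (j+1), (X 1 + Y t)) *
    ∏ t ∈ Finset.Ico (j+1) (m+1), (X 2 + Y t) with ha
  have hterm : ∀ i ∈ Finset.range m,
      (∏ t ∈ Finset.Ico 1 (1+i+1), (X 2 + Y t)⁻¹) *
        (∏ t ∈ Finset.Ico (1+i) (m+1), (X 1 + Y t)⁻¹) = (a (i+1) - a i) / D := by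
    intro i hi
    rw [Finset.mem_range] at hi
    rw [eq_div_iff hDne]
    rw [show 1+i+1 = i+2 from by omega, show 1+i = i+1 from by omega]
    have s1 : P1 = (∏ t ∈ Finset.Ico 1 (i+1), (X 1 + Y t)) *
        ∏ t ∈ Finset.Ico (i+1) (m+1), (X 1 + Y t) := by
      rw [hP1, Finset.prod_Ico_consecutive _ (by omega) (by omega)]
    have s2 : P2 = (∏ t ∈ Finset.Ico 1 (i+2), (X 2 + Y t)) *
        ∏ t ∈ Finset.Ico (i+2) (m+1), (X 2 + Y t) := by
      rw [hP2, Finset.prod_Ico_consecutive _ (by omega) (by omega)]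
    have s3 : a (i+1) = ((∏ t ∈ Finset.Ico 1 (i+1), (X 1 + Y t)) * (X 1 + Y (i+1))) *
        ∏ t ∈ Finset.Ico (i+2) (m+1), (X 2 + Y t) := by
      rw [ha]
      simp only
      rw [show i+1+1 = i+2 from rfl, Finset.prod_Ico_succ_top (by omega : 1 ≤ i+1)]
    have s4 : a i = (∏ t ∈ Finset.Ico 1 (i+1), (X 1 + Y t)) *
        ((X 2 + Y (i+1)) * ∏ t ∈ Finset.Ico (i+2) (m+1), (X 2 + Y t)) := by
      rw [ha]
      simp only
      rw [Finset.prod_eq_prod_Ico_succ_bot (show i+1 < m+1 by omega)]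
    have hprod2 : (∏ t ∈ Finset.Ico 1 (i+2), (X 2 + Y t)) ≠ 0 := hne1 2 0 _
    have hprod1 : (∏ t ∈ Finset.Ico (i+1) (m+1), (X 1 + Y t)) ≠ 0 := hne1 1 0 _
    rw [Finset.prod_inv_distrib, Finset.prod_inv_distrib, hD, s1, s2, s3, s4]
    field_simp
    ring
  -- Step 5: telescoping
  have ham : a m = P1 := by rw [ha]; simp [hP1]
  have ha0 : a 0 = P2 := by rw [ha]; simp [hP2]
  have h2 : ∑ j ∈ Finset.Icc 1 m,
      ((∏ t ∈ Finset.Ico 1 (j+1), (X 2 + Y t)⁻¹) *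
        ∏ t ∈ Finset.Ico j (m+1), (X 1 + Y t)⁻¹) = (P1 - P2) / D := by
    rw [← Finset.Ico_add_one_right_eq_Icc, Finset.sum_Ico_eq_sum_range,
      show m + 1 - 1 = m from rfl, Finset.sum_congr rfl hterm, ← Finset.sum_div,
      Finset.sum_range_sub a m, ham, ha0]
  rw [h2]
  have hDD : (X 1 - X 2) * ∏ i ∈ Finset.Icc 1 2, ∏ j ∈ Finset.Icc 1 m, (X i + Y j) = D := by
    rw [hD, hP1, hP2, show (Finset.Icc 1 2 : Finset ℕ) = {1, 2} from by decide,
      Finset.prod_insert (by decide), Finset.prod_singleton, Finset.Ico_add_one_right_eq_Icc]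
  rw [hDD]
  congr 1
end
end

section
/- Vertex version of the Lindström–Gessel–Viennot lemma: let G be a finite acyclic directed graph without multiple edges, A_1,...,A_k and B_1,...,B_k vertices, w : V → R a vertex weight function into a commutative ring R, and define the weight of a path as the product of the weights of all its vertices (including endpoints). If U is the k×k matrix with u_{ij} equal to the sum of weights of all directed paths from A_i to B_j, then det U equals the sum over permutations π in S_k, with sign, of the weights of all k-tuples of pairwise vertex-disjoint paths γ_i : A_i → B_{π(i)}. -/
set_option linter.unusedSectionVars false
open List

section
variable {V : Type*} [Fintype V] [DecidableEq V] {E : V → V → Prop}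

omit [Fintype V] [DecidableEq V] in
lemma chain'_nodup (hacyclic : ∀ p : List V, p.Chain' E → p.head? = p.getLast? → p.length ≤ 1) :
    ∀ p : List V, p.Chain' E → p.Nodup := by
  intro p
  induction p with
  | nil => simp
  | cons x rest ih =>
    intro hc
    have hrest := ih hc.tail
    refine List.nodup_cons.2 ⟨?_, hrest⟩
    intro hx
    obtain ⟨s, t, rfl⟩ := List.append_of_mem hx
    have hpre : (x :: s ++ [x]) <+: (x :: (s ++ x :: t)) := ⟨t, by simp⟩
    have hq : (x :: s ++ [x]).Chain' E := hc.prefix hpre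
    have := hacyclic _ hq (by rw [show (x :: s ++ [x] : List V) = (x :: s) ++ [x] by simp, List.getLast?_concat]; simp)
    simp at this


omit [DecidableEq V] in
lemma path_finite (hacyclic : ∀ p : List V, p.Chain' E → p.head? = p.getLast? → p.length ≤ 1)
    (P : List V → Prop) (hP : ∀ p, P p → p.Chain' E) : {p : List V | P p}.Finite := by
  apply (List.finite_length_le V (Fintype.card V)).subset
  intro p hp
  exact ((chain'_nodup hacyclic p (hP p hp)).length_le_card)

end
open List

section
variable {V : Type*} [DecidableEq V]

/-- Prefix of `p` before the first occurrence of `v`. -/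
def lgvPre (v : V) (p : List V) : List V := p.takeWhile (· != v)
/-- Suffix of `p` after the first occurrence of `v`. -/
def lgvSuf (v : V) (p : List V) : List V := (p.dropWhile (· != v)).tail
/-- Path obtained by following `p` up to `v`, then `q` after `v`. -/
def lgvGlue (v : V) (p q : List V) : List V := lgvPre v p ++ v :: lgvSuf v q

lemma lgv_decomp (v : V) {p : List V} (hv : v ∈ p) :
    p = lgvPre v p ++ v :: lgvSuf v p := by
  have hne : p.dropWhile (· != v) ≠ [] := by
    intro h
    have := List.takeWhile_append_dropWhile (p := (· != v)) (l := p)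
    rw [h, List.append_nil] at this
    have := List.mem_takeWhile_imp (p := (· != v)) (this ▸ hv)
    simp at this
  have hhead := List.head_dropWhile_not (· != v) hne
  simp only [bne_eq_false_iff_eq] at hhead
  have h2 : p.dropWhile (· != v) = v :: lgvSuf v p := by
    conv_lhs => rw [← List.cons_head_tail hne]
    rw [hhead]
    rfl
  conv_lhs => rw [← List.takeWhile_append_dropWhile (p := (· != v)) (l := p), h2]
  rfl

lemma lgv_not_mem_pre (v : V) (p : List V) : v ∉ lgvPre v p := by
  intro h
  have := List.mem_takeWhile_imp (p := (· != v)) h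
  simp at this

lemma lgvPre_eq {v : V} {s : List V} (t : List V) (hs : v ∉ s) :
    lgvPre v (s ++ v :: t) = s := by
  induction s with
  | nil => simp [lgvPre]
  | cons a s ih =>
    simp only [List.mem_cons, not_or] at hs
    have ha : (a != v) = true := by simpa [bne_iff_ne] using fun h => hs.1 h.symm
    simpa [lgvPre, List.takeWhile_cons, ha] using ih hs.2

lemma lgvSuf_eq {v : V} {s : List V} (t : List V) (hs : v ∉ s) :
    lgvSuf v (s ++ v :: t) = t := by
  induction s with
  | nil => simp [lgvSuf]
  | cons a s ih =>
    simp only [List.mem_cons, not_or] at hs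
    have ha : (a != v) = true := by simpa [bne_iff_ne] using fun h => hs.1 h.symm
    simpa [lgvSuf, List.dropWhile_cons, ha] using ih hs.2

lemma lgvGlue_glue (v : V) (p q : List V) :
    lgvGlue v (lgvGlue v p q) (lgvGlue v q p) = lgvPre v p ++ v :: lgvSuf v p := by
  unfold lgvGlue
  rw [lgvPre_eq _ (lgv_not_mem_pre v p), lgvSuf_eq _ (lgv_not_mem_pre v q)]

lemma lgv_mem_glue (v : V) (p q : List V) : v ∈ lgvGlue v p q := by
  simp [lgvGlue]

lemma lgvGlue_subset {v : V} {p q : List V} (hq : v ∈ q) :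
    ∀ u ∈ lgvGlue v p q, u ∈ p ∨ u ∈ q := by
  intro u hu
  rw [lgvGlue, List.mem_append, List.mem_cons] at hu
  rcases hu with h | h | h
  · left
    have := List.takeWhile_prefix (l := p) (· != v)
    exact this.subset h
  · right; exact h ▸ hq
  · right
    rw [lgv_decomp v hq]
    exact List.mem_append_right _ (List.mem_cons_of_mem _ h)

lemma lgvGlue_chain' {E : V → V → Prop} {v : V} {p q : List V}
    (hp : p.Chain' E) (hq : q.Chain' E) (hvp : v ∈ p) (hvq : v ∈ q) :
    (lgvGlue v p q).Chain' E := by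
  rw [lgv_decomp v hvp, List.Chain', List.isChain_append] at hp
  rw [lgv_decomp v hvq, List.Chain', List.isChain_append] at hq
  rw [lgvGlue, List.Chain', List.isChain_append]
  exact ⟨hp.1, hq.2.1, by simpa using hp.2.2⟩

lemma lgvGlue_head? {v : V} {p : List V} (q : List V) (hvp : v ∈ p) :
    (lgvGlue v p q).head? = p.head? := by
  conv_rhs => rw [lgv_decomp v hvp]
  rw [lgvGlue]
  cases lgvPre v p <;> simp

lemma lgvGlue_getLast? {v : V} (p : List V) {q : List V} (hvq : v ∈ q) :
    (lgvGlue v p q).getLast? = q.getLast? := by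
  conv_rhs => rw [lgv_decomp v hvq]
  rw [lgvGlue, List.getLast?_append, List.getLast?_append]
  cases hx : (v :: lgvSuf v q).getLast? with
  | none => simp at hx
  | some x => simp

lemma lgvGlue_weight {R : Type*} [CommRing R] (w : V → R) {v : V} {p q : List V}
    (hvp : v ∈ p) (hvq : v ∈ q) :
    ((lgvGlue v p q).map w).prod * ((lgvGlue v q p).map w).prod
      = (p.map w).prod * (q.map w).prod := by
  conv_rhs => rw [lgv_decomp v hvp, lgv_decomp v hvq]
  simp only [lgvGlue, List.map_append, List.prod_append, List.map_cons, List.prod_cons]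
  ring

/-- first element of `l` satisfying `Q`. -/
def lgvFirst (Q : V → Prop) [DecidablePred Q] (l : List V) : Option V :=
  (l.dropWhile (fun u => !decide (Q u))).head?

lemma lgvFirst_eq {Q : V → Prop} [DecidablePred Q] {s : List V} {v : V} (t : List V)
    (hs : ∀ u ∈ s, ¬ Q u) (hv : Q v) : lgvFirst Q (s ++ v :: t) = some v := by
  induction s with
  | nil => simp [lgvFirst, List.dropWhile_cons, hv]
  | cons a s ih =>
    have ha : ¬ Q a := hs a (by simp)
    simpa [lgvFirst, List.dropWhile_cons, ha] using ih (fun u hu => hs u (by simp [hu]))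

lemma lgvFirst_exists {Q : V → Prop} [DecidablePred Q] {l : List V} (h : ∃ x ∈ l, Q x) :
    ∃ v, lgvFirst Q l = some v ∧ Q v ∧ ∃ s t, l = s ++ v :: t ∧ ∀ u ∈ s, ¬ Q u := by
  induction l with
  | nil => simp at h
  | cons a l ih =>
    by_cases ha : Q a
    · exact ⟨a, lgvFirst_eq (s := []) l (by simp) ha, ha, [], l, rfl, by simp⟩
    · obtain ⟨x, hx, hQx⟩ := h
      rcases List.mem_cons.1 hx with rfl | hx
      · exact absurd hQx ha
      · obtain ⟨v, h1, h2, s, t, rfl, h3⟩ := ih ⟨x, hx, hQx⟩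
        refine ⟨v, ?_, h2, a :: s, t, rfl, ?_⟩
        · simpa [lgvFirst, List.dropWhile_cons, ha] using h1
        · intro u hu
          rcases List.mem_cons.1 hu with rfl | hu
          · exact ha
          · exact h3 u hu

end

section
variable {V : Type*} [DecidableEq V] {k : ℕ}

open Classical in
/-- The tail-swapping involution of the LGV lemma. -/
noncomputable def lgvSwap (x : Equiv.Perm (Fin k) × (Fin k → List V)) :
    Equiv.Perm (Fin k) × (Fin k → List V) :=
  let γ := x.2
  if h : (Finset.univ.filter (fun i : Fin k => ∃ j, j ≠ i ∧ ∃ v, v ∈ γ i ∧ v ∈ γ j)).Nonempty then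
    let i₀ := (Finset.univ.filter (fun i : Fin k => ∃ j, j ≠ i ∧ ∃ v, v ∈ γ i ∧ v ∈ γ j)).min' h
    (lgvFirst (fun v => ∃ j, j ≠ i₀ ∧ v ∈ γ j) (γ i₀)).elim x (fun v =>
      if hJ : (Finset.univ.filter (fun j : Fin k => j ≠ i₀ ∧ v ∈ γ j)).Nonempty then
        let j₀ := (Finset.univ.filter (fun j : Fin k => j ≠ i₀ ∧ v ∈ γ j)).min' hJ
        (x.1 * Equiv.swap i₀ j₀,
          Function.update (Function.update γ i₀ (lgvGlue v (γ i₀) (γ j₀))) j₀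
            (lgvGlue v (γ j₀) (γ i₀)))
      else x)
  else x

open Classical in
lemma lgvSwap_eq (π : Equiv.Perm (Fin k)) (γ : Fin k → List V) {i₀ j₀ : Fin k} {v : V}
    (hi₀mem : ∃ j, j ≠ i₀ ∧ ∃ v, v ∈ γ i₀ ∧ v ∈ γ j)
    (hi₀min : ∀ i, (∃ j, j ≠ i ∧ ∃ v, v ∈ γ i ∧ v ∈ γ j) → i₀ ≤ i)
    (hfv : lgvFirst (fun v => ∃ j, j ≠ i₀ ∧ v ∈ γ j) (γ i₀) = some v)
    (hj₀mem : j₀ ≠ i₀ ∧ v ∈ γ j₀)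
    (hj₀min : ∀ j, j ≠ i₀ → v ∈ γ j → j₀ ≤ j) :
    lgvSwap (π, γ) = (π * Equiv.swap i₀ j₀,
      Function.update (Function.update γ i₀ (lgvGlue v (γ i₀) (γ j₀))) j₀
        (lgvGlue v (γ j₀) (γ i₀))) := by
  have hB : (Finset.univ.filter (fun i : Fin k => ∃ j, j ≠ i ∧ ∃ v, v ∈ γ i ∧ v ∈ γ j)).Nonempty :=
    ⟨i₀, by simpa using hi₀mem⟩
  have hBmin : (Finset.univ.filter
      (fun i : Fin k => ∃ j, j ≠ i ∧ ∃ v, v ∈ γ i ∧ v ∈ γ j)).min' hB = i₀ := by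
    refine le_antisymm (Finset.min'_le _ _ (by simpa using hi₀mem)) ?_
    exact Finset.le_min' _ _ _ (fun y hy => hi₀min y (by simpa using hy))
  have hJ : (Finset.univ.filter (fun j : Fin k => j ≠ i₀ ∧ v ∈ γ j)).Nonempty :=
    ⟨j₀, by simpa using hj₀mem⟩
  have hJmin : (Finset.univ.filter (fun j : Fin k => j ≠ i₀ ∧ v ∈ γ j)).min' hJ = j₀ := by
    refine le_antisymm (Finset.min'_le _ _ (by simpa using hj₀mem)) ?_
    refine Finset.le_min' _ _ _ (fun y hy => ?_)
    have h := Finset.mem_filter.1 hy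
    exact hj₀min y h.2.1 h.2.2
  rw [lgvSwap]
  simp only [dif_pos hB, hBmin, hfv, Option.elim_some, dif_pos hJ, hJmin]

end
open List

section
variable {V : Type*} [DecidableEq V] {k : ℕ}

open Classical in
lemma lgvSwap_spec {E : V → V → Prop} {R : Type*} [CommRing R] (w : V → R)
    (hacyclic : ∀ p : List V, p.Chain' E → p.head? = p.getLast? → p.length ≤ 1)
    (A B : Fin k → V) (π : Equiv.Perm (Fin k)) (γ : Fin k → List V)
    (hpath : ∀ i, (γ i).Chain' E ∧ (γ i).head? = some (A i) ∧ (γ i).getLast? = some (B (π i)))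
    (hnd : ¬ ∀ i j, i ≠ j → ∀ v ∈ γ i, v ∉ γ j) :
    (∀ i, ((lgvSwap (π, γ)).2 i).Chain' E ∧ ((lgvSwap (π, γ)).2 i).head? = some (A i) ∧
        ((lgvSwap (π, γ)).2 i).getLast? = some (B ((lgvSwap (π, γ)).1 i))) ∧
    (¬ ∀ i j, i ≠ j → ∀ v ∈ (lgvSwap (π, γ)).2 i, v ∉ (lgvSwap (π, γ)).2 j) ∧
    Equiv.Perm.sign (lgvSwap (π, γ)).1 = - Equiv.Perm.sign π ∧
    (∏ i, (((lgvSwap (π, γ)).2 i).map w).prod = ∏ i, ((γ i).map w).prod) ∧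
    lgvSwap (lgvSwap (π, γ)) = (π, γ) ∧
    (lgvSwap (π, γ)).1 ≠ π := by
  have hndp : ∀ i, (γ i).Nodup := fun i => chain'_nodup hacyclic _ (hpath i).1
  -- choose i₀
  push_neg at hnd
  obtain ⟨i1, j1, hij1, v1, hv1i, hv1j⟩ := hnd
  set Pbad : Fin k → Prop := fun i => ∃ j, j ≠ i ∧ ∃ v, v ∈ γ i ∧ v ∈ γ j with hPbad
  have hBf : (Finset.univ.filter Pbad).Nonempty :=
    ⟨i1, Finset.mem_filter.2 ⟨Finset.mem_univ _, j1, hij1.symm, v1, hv1i, hv1j⟩⟩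
  set i₀ := (Finset.univ.filter Pbad).min' hBf with hi₀def
  have hi₀mem : Pbad i₀ := (Finset.mem_filter.1 ((Finset.univ.filter Pbad).min'_mem hBf)).2
  have hi₀min : ∀ i, Pbad i → i₀ ≤ i := fun i hi =>
    Finset.min'_le _ _ (Finset.mem_filter.2 ⟨Finset.mem_univ _, hi⟩)
  -- choose v
  have hQex : ∃ x ∈ γ i₀, ∃ j, j ≠ i₀ ∧ x ∈ γ j := by
    obtain ⟨j, hj, u, hu1, hu2⟩ := hi₀mem
    exact ⟨u, hu1, j, hj, hu2⟩
  obtain ⟨v, hfv, hQv, s, t, hst, hsQ⟩ := lgvFirst_exists hQex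
  have hvi₀ : v ∈ γ i₀ := by rw [hst]; simp
  have hvs : v ∉ s := fun h => hsQ v h hQv
  have hpre : lgvPre v (γ i₀) = s := by rw [hst]; exact lgvPre_eq t hvs
  have hsuf : lgvSuf v (γ i₀) = t := by rw [hst]; exact lgvSuf_eq t hvs
  -- choose j₀
  set PJ : Fin k → Prop := fun j => j ≠ i₀ ∧ v ∈ γ j with hPJ
  have hJf : (Finset.univ.filter PJ).Nonempty := by
    obtain ⟨j, hj1, hj2⟩ := hQv
    exact ⟨j, Finset.mem_filter.2 ⟨Finset.mem_univ _, hj1, hj2⟩⟩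
  set j₀ := (Finset.univ.filter PJ).min' hJf with hj₀def
  have hj₀mem : PJ j₀ := (Finset.mem_filter.1 ((Finset.univ.filter PJ).min'_mem hJf)).2
  have hj₀min : ∀ j, j ≠ i₀ → v ∈ γ j → j₀ ≤ j := fun j h1 h2 =>
    Finset.min'_le _ _ (Finset.mem_filter.2 ⟨Finset.mem_univ _, h1, h2⟩)
  have hne : i₀ ≠ j₀ := hj₀mem.1.symm
  have hvj₀ : v ∈ γ j₀ := hj₀mem.2
  have hi₀j₀ : i₀ ≤ j₀ := hi₀min j₀ ⟨i₀, hne, v, hvj₀, hvi₀⟩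
  -- the swap
  have hkey := lgvSwap_eq π γ hi₀mem hi₀min hfv hj₀mem hj₀min
  set a := lgvGlue v (γ i₀) (γ j₀) with ha
  set b := lgvGlue v (γ j₀) (γ i₀) with hb
  set γ' := Function.update (Function.update γ i₀ a) j₀ b with hγ'
  set π' := π * Equiv.swap i₀ j₀ with hπ'
  rw [hkey]
  dsimp only
  have hγ'j₀ : γ' j₀ = b := by simp [hγ']
  have hγ'i₀ : γ' i₀ = a := by
    rw [hγ', Function.update_of_ne hne, Function.update_self]
  have hγ'o : ∀ i, i ≠ i₀ → i ≠ j₀ → γ' i = γ i := fun i h1 h2 => by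
    rw [hγ', Function.update_of_ne h2, Function.update_of_ne h1]
  have hπ'i₀ : π' i₀ = π j₀ := by
    rw [hπ', Equiv.Perm.mul_apply, Equiv.swap_apply_left]
  have hπ'j₀ : π' j₀ = π i₀ := by
    rw [hπ', Equiv.Perm.mul_apply, Equiv.swap_apply_right]
  have hva : v ∈ a := lgv_mem_glue v _ _
  have hvb : v ∈ b := lgv_mem_glue v _ _
  have hasub : ∀ u ∈ a, u ∈ γ i₀ ∨ u ∈ γ j₀ := fun u hu => lgvGlue_subset hvj₀ u hu
  have hbsub : ∀ u ∈ b, u ∈ γ j₀ ∨ u ∈ γ i₀ := fun u hu => lgvGlue_subset hvi₀ u hu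
  refine ⟨?_, ?_, ?_, ?_, ?_, ?_⟩
  · -- path conditions
    intro i
    rcases eq_or_ne i i₀ with rfl | hii₀
    · rw [hγ'i₀, ha, hπ'i₀]
      exact ⟨lgvGlue_chain' (hpath i₀).1 (hpath j₀).1 hvi₀ hvj₀,
        by rw [lgvGlue_head? _ hvi₀]; exact (hpath i₀).2.1,
        by rw [lgvGlue_getLast? _ hvj₀]; exact (hpath j₀).2.2⟩
    rcases eq_or_ne i j₀ with rfl | hij₀
    · rw [hγ'j₀, hb, hπ'j₀]
      exact ⟨lgvGlue_chain' (hpath j₀).1 (hpath i₀).1 hvj₀ hvi₀,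
        by rw [lgvGlue_head? _ hvj₀]; exact (hpath j₀).2.1,
        by rw [lgvGlue_getLast? _ hvi₀]; exact (hpath i₀).2.2⟩
    · rw [hγ'o i hii₀ hij₀, hπ', Equiv.Perm.mul_apply,
        Equiv.swap_apply_of_ne_of_ne hii₀ hij₀]
      exact hpath i
  · -- still not disjoint
    intro h
    exact h i₀ j₀ hne v (by rw [hγ'i₀]; exact hva) (by rw [hγ'j₀]; exact hvb)
  · -- sign
    rw [hπ', Equiv.Perm.sign_mul, Equiv.Perm.sign_swap hne, mul_neg_one]
  · -- weight
    have h1 : ∀ δ : Fin k → List V, ∏ i, ((δ i).map w).prod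
        = ((δ i₀).map w).prod * ((δ j₀).map w).prod *
          ∏ i ∈ (Finset.univ.erase i₀).erase j₀, ((δ i).map w).prod := by
      intro δ
      rw [← Finset.mul_prod_erase Finset.univ _ (Finset.mem_univ i₀),
        ← Finset.mul_prod_erase _ _
          (Finset.mem_erase.2 ⟨hj₀mem.1, Finset.mem_univ j₀⟩), ← mul_assoc]
    rw [h1 γ', h1 γ, hγ'i₀, hγ'j₀]
    congr 1
    · rw [ha, hb]; exact lgvGlue_weight w hvi₀ hvj₀
    · refine Finset.prod_congr rfl (fun i hi => ?_)
      rw [Finset.mem_erase, Finset.mem_erase] at hi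
      rw [hγ'o i hi.2.1 hi.1]
  · -- involution
    have hi₀mem' : ∃ j, j ≠ i₀ ∧ ∃ u, u ∈ γ' i₀ ∧ u ∈ γ' j :=
      ⟨j₀, hj₀mem.1, v, by rw [hγ'i₀]; exact hva, by rw [hγ'j₀]; exact hvb⟩
    have hi₀min' : ∀ i, (∃ j, j ≠ i ∧ ∃ u, u ∈ γ' i ∧ u ∈ γ' j) → i₀ ≤ i := by
      intro i ⟨j, hji, u, hui, huj⟩
      by_contra hlt
      push_neg at hlt
      have hii₀ : i ≠ i₀ := ne_of_lt hlt
      have hij₀ : i ≠ j₀ := ne_of_lt (lt_of_lt_of_le hlt hi₀j₀)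
      rw [hγ'o i hii₀ hij₀] at hui
      have hP : Pbad i := by
        rcases eq_or_ne j i₀ with rfl | hji₀
        · rw [hγ'i₀] at huj
          rcases hasub u huj with h | h
          · exact ⟨i₀, Ne.symm hii₀, u, hui, h⟩
          · exact ⟨j₀, Ne.symm hij₀, u, hui, h⟩
        rcases eq_or_ne j j₀ with rfl | hjj₀
        · rw [hγ'j₀] at huj
          rcases hbsub u huj with h | h
          · exact ⟨j₀, Ne.symm hij₀, u, hui, h⟩
          · exact ⟨i₀, Ne.symm hii₀, u, hui, h⟩
        · rw [hγ'o j hji₀ hjj₀] at huj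
          exact ⟨j, hji, u, hui, huj⟩
      exact absurd (hi₀min i hP) (not_le.2 hlt)
    have hdisj : s.Disjoint (v :: t) := by
      have := hndp i₀
      rw [hst, List.nodup_append] at this
      exact List.disjoint_iff_ne.2 this.2.2
    have hfv' : lgvFirst (fun u => ∃ j, j ≠ i₀ ∧ u ∈ γ' j) (γ' i₀) = some v := by
      have hγ'i₀eq : γ' i₀ = s ++ v :: lgvSuf v (γ j₀) := by
        rw [hγ'i₀, ha, lgvGlue, hpre]
      rw [hγ'i₀eq]
      refine lgvFirst_eq _ ?_ ⟨j₀, hj₀mem.1, by rw [hγ'j₀]; exact hvb⟩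
      intro u hu ⟨j, hjne, huj⟩
      rcases eq_or_ne j j₀ with rfl | hjj₀
      · rw [hγ'j₀, hb, lgvGlue, hsuf] at huj
        rcases List.mem_append.1 huj with h | h
        · exact hsQ u hu ⟨j₀, hj₀mem.1,
            (List.takeWhile_prefix _).subset h⟩
        · rcases List.mem_cons.1 h with rfl | h
          · exact hvs hu
          · exact hdisj hu (List.mem_cons_of_mem _ h)
      · rw [hγ'o j hjne hjj₀] at huj
        exact hsQ u hu ⟨j, hjne, huj⟩
    have hj₀mem' : j₀ ≠ i₀ ∧ v ∈ γ' j₀ := ⟨hj₀mem.1, by rw [hγ'j₀]; exact hvb⟩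
    have hj₀min' : ∀ j, j ≠ i₀ → v ∈ γ' j → j₀ ≤ j := by
      intro j h1 h2
      rcases eq_or_ne j j₀ with rfl | hjj₀
      · exact le_refl _
      · rw [hγ'o j h1 hjj₀] at h2
        exact hj₀min j h1 h2
    have hkey2 := lgvSwap_eq π' γ' hi₀mem' hi₀min' hfv' hj₀mem' hj₀min'
    rw [hkey2]
    have hπ'' : π' * Equiv.swap i₀ j₀ = π := by
      rw [hπ', mul_assoc, Equiv.swap_mul_self, mul_one]
    have hγ'' : Function.update (Function.update γ' i₀ (lgvGlue v (γ' i₀) (γ' j₀))) j₀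
        (lgvGlue v (γ' j₀) (γ' i₀)) = γ := by
      have hA : lgvGlue v (γ' i₀) (γ' j₀) = γ i₀ := by
        rw [hγ'i₀, hγ'j₀, ha, hb, lgvGlue_glue, ← lgv_decomp v hvi₀]
      have hB : lgvGlue v (γ' j₀) (γ' i₀) = γ j₀ := by
        rw [hγ'i₀, hγ'j₀, ha, hb, lgvGlue_glue, ← lgv_decomp v hvj₀]
      funext i
      rcases eq_or_ne i j₀ with rfl | hij₀
      · rw [Function.update_self, hB]
      rw [Function.update_of_ne hij₀]
      rcases eq_or_ne i i₀ with rfl | hii₀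
      · rw [Function.update_self, hA]
      · rw [Function.update_of_ne hii₀]
        exact hγ'o i hii₀ hij₀
    rw [hπ'', hγ'']
  · -- not equal
    intro h
    have : π' i₀ = π i₀ := by rw [h]
    rw [hπ'i₀] at this
    exact hne (π.injective this).symm

end



/-- Vertex version of the Lindström–Gessel–Viennot lemma.  `G` is a finite acyclic
directed graph (vertex set `V`, edge relation `E`, with no multiple edges since `E` is a
relation); a path is a list of vertices consecutively joined by directed edges; the weight
of a path is the product of the vertex weights `w(v)` over all its vertices; acyclicity is
expressed by saying that any path whose first and last vertices coincide has at most one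
vertex.  If `U` is the `k × k` matrix whose `(i,j)` entry is the sum of the weights of all
paths from `A i` to `B j`, then `det U` is the signed sum, over permutations `π`, of the
weights of all tuples of pairwise vertex-disjoint paths `γ i : A i → B (π i)`. -/
theorem stmt5 {V : Type*} [Fintype V] {R : Type*} [CommRing R]
    (E : V → V → Prop)
    (hacyclic : ∀ p : List V, p.Chain' E → p.head? = p.getLast? → p.length ≤ 1)
    (k : ℕ) (A B : Fin k → V) (w : V → R)
    (U : Matrix (Fin k) (Fin k) R)
    (hU : ∀ i j, U i j =
      ∑ᶠ p : {p : List V //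
          p.Chain' E ∧ p.head? = some (A i) ∧ p.getLast? = some (B j)},
        (p.1.map w).prod) :
    U.det =
      ∑ π : Equiv.Perm (Fin k), (Equiv.Perm.sign π : ℤ) •
        ∑ᶠ γ : {γ : Fin k → List V //
            (∀ i, (γ i).Chain' E ∧ (γ i).head? = some (A i) ∧
              (γ i).getLast? = some (B (π i))) ∧
            (∀ i j, i ≠ j → ∀ v ∈ γ i, v ∉ γ j)},
          ∏ i, ((γ.1 i).map w).prod := by
  classical
  have hfin : ∀ a b : V,
      {p : List V | p.Chain' E ∧ p.head? = some a ∧ p.getLast? = some b}.Finite :=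
    fun a b => path_finite hacyclic _ (fun p hp => hp.1)
  set P : V → V → Finset (List V) := fun a b => (hfin a b).toFinset with hP
  have hPmem : ∀ a b (p : List V), p ∈ P a b ↔
      p.Chain' E ∧ p.head? = some a ∧ p.getLast? = some b :=
    fun a b p => (hfin a b).mem_toFinset
  have hU' : ∀ i j, U i j = ∑ p ∈ P (A i) (B j), (p.map w).prod := by
    intro i j
    rw [hU i j]
    haveI : Fintype {p : List V //
        p.Chain' E ∧ p.head? = some (A i) ∧ p.getLast? = some (B j)} :=
      (hfin (A i) (B j)).fintype
    rw [finsum_eq_sum_of_fintype]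
    exact (Finset.sum_subtype (P (A i) (B j)) (fun p => hPmem (A i) (B j) p)
      (fun p => (p.map w).prod)).symm
  -- the tuple sums
  have hSfin : ∀ σ : Equiv.Perm (Fin k),
      {γ : Fin k → List V |
        (∀ i, (γ i).Chain' E ∧ (γ i).head? = some (A i) ∧
          (γ i).getLast? = some (B (σ i))) ∧
        (∀ i j, i ≠ j → ∀ v ∈ γ i, v ∉ γ j)}.Finite := by
    intro σ
    refine (Set.Finite.pi (fun i => hfin (A i) (B (σ i)))).subset ?_
    intro γ hγ
    rw [Set.mem_pi]
    intro i _
    exact hγ.1 i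
  have hrhs : ∀ σ : Equiv.Perm (Fin k),
      (∑ᶠ γ : {γ : Fin k → List V //
          (∀ i, (γ i).Chain' E ∧ (γ i).head? = some (A i) ∧
            (γ i).getLast? = some (B (σ i))) ∧
          (∀ i j, i ≠ j → ∀ v ∈ γ i, v ∉ γ j)},
        ∏ i, ((γ.1 i).map w).prod) =
      ∑ γ ∈ (Fintype.piFinset (fun i => P (A i) (B (σ i)))).filter
          (fun γ => ∀ i j, i ≠ j → ∀ v ∈ γ i, v ∉ γ j),
        ∏ i, ((γ i).map w).prod := by
    intro σ
    haveI : Fintype {γ : Fin k → List V //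
        (∀ i, (γ i).Chain' E ∧ (γ i).head? = some (A i) ∧
          (γ i).getLast? = some (B (σ i))) ∧
        (∀ i j, i ≠ j → ∀ v ∈ γ i, v ∉ γ j)} := (hSfin σ).fintype
    rw [finsum_eq_sum_of_fintype]
    refine (Finset.sum_subtype ((Fintype.piFinset (fun i => P (A i) (B (σ i)))).filter
        (fun γ => ∀ i j, i ≠ j → ∀ v ∈ γ i, v ∉ γ j)) (fun γ => ?_)
      (fun γ => ∏ i, ((γ i).map w).prod)).symm
    rw [Finset.mem_filter, Fintype.mem_piFinset]
    constructor
    · rintro ⟨h1, h2⟩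
      exact ⟨fun i => (hPmem _ _ _).1 (h1 i), h2⟩
    · rintro ⟨h1, h2⟩
      exact ⟨fun i => (hPmem _ _ _).2 (h1 i), h2⟩
  have hdet : U.det = ∑ σ : Equiv.Perm (Fin k),
      ((Equiv.Perm.sign σ : ℤ) : R) *
        ∑ γ ∈ Fintype.piFinset (fun i => P (A i) (B (σ i))),
          ∏ i, ((γ i).map w).prod := by
    rw [← Matrix.det_transpose, Matrix.det_apply']
    refine Finset.sum_congr rfl (fun σ _ => ?_)
    congr 1
    rw [show (∏ i, U.transpose (σ i) i)
        = ∏ i, ∑ p ∈ P (A i) (B (σ i)), (p.map w).prod from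
      Finset.prod_congr rfl (fun i _ => by rw [Matrix.transpose_apply, hU']),
      Finset.prod_univ_sum]
  rw [hdet]
  simp only [hrhs, zsmul_eq_mul]
  -- split each pi-sum into disjoint and non-disjoint parts
  have hsplit : ∀ σ : Equiv.Perm (Fin k),
      (∑ γ ∈ Fintype.piFinset (fun i => P (A i) (B (σ i))),
        ∏ i, ((γ i).map w).prod) =
      (∑ γ ∈ (Fintype.piFinset (fun i => P (A i) (B (σ i)))).filter
          (fun γ => ∀ i j, i ≠ j → ∀ v ∈ γ i, v ∉ γ j),
        ∏ i, ((γ i).map w).prod) +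
      (∑ γ ∈ (Fintype.piFinset (fun i => P (A i) (B (σ i)))).filter
          (fun γ => ¬ ∀ i j, i ≠ j → ∀ v ∈ γ i, v ∉ γ j),
        ∏ i, ((γ i).map w).prod) :=
    fun σ => (Finset.sum_filter_add_sum_filter_not _ _ _).symm
  have hzero : (∑ σ : Equiv.Perm (Fin k),
      ((Equiv.Perm.sign σ : ℤ) : R) *
        ∑ γ ∈ (Fintype.piFinset (fun i => P (A i) (B (σ i)))).filter
            (fun γ => ¬ ∀ i j, i ≠ j → ∀ v ∈ γ i, v ∉ γ j),
          ∏ i, ((γ i).map w).prod) = 0 := by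
    simp_rw [Finset.mul_sum]
    rw [← Finset.sum_sigma Finset.univ
      (fun σ => (Fintype.piFinset (fun i => P (A i) (B (σ i)))).filter
        (fun γ => ¬ ∀ i j, i ≠ j → ∀ v ∈ γ i, v ∉ γ j))
      (fun x => ((Equiv.Perm.sign x.1 : ℤ) : R) * ∏ i, ((x.2 i).map w).prod)]
    refine Finset.sum_involution
      (fun x _ => ⟨(lgvSwap (x.1, x.2)).1, (lgvSwap (x.1, x.2)).2⟩) ?_ ?_ ?_ ?_
    all_goals
      intro x hx
      rw [Finset.mem_sigma, Finset.mem_filter, Fintype.mem_piFinset] at hx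
      obtain ⟨-, hmem, hnd⟩ := hx
      have hpath : ∀ i, ((x.2) i).Chain' E ∧ ((x.2) i).head? = some (A i) ∧
          ((x.2) i).getLast? = some (B (x.1 i)) :=
        fun i => (hPmem _ _ _).1 (hmem i)
      obtain ⟨s1, s2, s3, s4, s5, s6⟩ := lgvSwap_spec w hacyclic A B x.1 x.2 hpath hnd
    · -- sums to zero
      rw [s3 , s4]
      push_cast
      ring
    · -- no fixed point
      intro _ h
      exact s6 (congrArg Sigma.fst h)
    · -- stays in the set
      rw [Finset.mem_sigma, Finset.mem_filter, Fintype.mem_piFinset]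
      exact ⟨Finset.mem_univ _, fun i => (hPmem _ _ _).2 (s1 i), s2⟩
    · -- involutive
      show (⟨(lgvSwap ((lgvSwap (x.1, x.2)).1, (lgvSwap (x.1, x.2)).2)).1,
        (lgvSwap ((lgvSwap (x.1, x.2)).1, (lgvSwap (x.1, x.2)).2)).2⟩ :
          (_ : Equiv.Perm (Fin k)) × (Fin k → List V)) = x
      rw [show ((lgvSwap (x.1, x.2)).1, (lgvSwap (x.1, x.2)).2) = lgvSwap (x.1, x.2)
        from rfl, s5]
  calc ∑ σ : Equiv.Perm (Fin k), ((Equiv.Perm.sign σ : ℤ) : R) *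
        ∑ γ ∈ Fintype.piFinset (fun i => P (A i) (B (σ i))),
          ∏ i, ((γ i).map w).prod
      = (∑ σ : Equiv.Perm (Fin k), ((Equiv.Perm.sign σ : ℤ) : R) *
          ∑ γ ∈ (Fintype.piFinset (fun i => P (A i) (B (σ i)))).filter
              (fun γ => ∀ i j, i ≠ j → ∀ v ∈ γ i, v ∉ γ j),
            ∏ i, ((γ i).map w).prod) +
        (∑ σ : Equiv.Perm (Fin k), ((Equiv.Perm.sign σ : ℤ) : R) *
          ∑ γ ∈ (Fintype.piFinset (fun i => P (A i) (B (σ i)))).filter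
              (fun γ => ¬ ∀ i j, i ≠ j → ∀ v ∈ γ i, v ∉ γ j),
            ∏ i, ((γ i).map w).prod) := by
        rw [← Finset.sum_add_distrib]
        refine Finset.sum_congr rfl (fun σ _ => ?_)
        rw [← mul_add, ← hsplit σ]
    _ = _ := by rw [hzero, add_zero]
end

section
/- With Q_{s,k}(t) the degree-< k representative of ∏_{j=s}^m 1/(x_j − t) modulo P_k(t) = (t+y_1)···(t+y_k), one has the polynomial identity (x_s + y_k) · Q_{s,k}(t) = Q_{s+1,k}(t) + (t + y_k) · Q_{s,k−1}(t) for all 1 ≤ s ≤ m and 2 ≤ k ≤ n, where Q_{m+1,k}(t) is interpreted as the representative of the empty product, i.e. the degree-< k representative of 1. -/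
open Finset

noncomputable section

/-- With `Q_{s,k}` the degree-`< k` representative of `∏_{j=s}^m 1/(x_j − t)` modulo
`P_k(t) = (t+y_1)⋯(t+y_k)` (an empty product, for `s = m+1`, being `1`), one has the
polynomial identity
`(x_s + y_k)·Q_{s,k}(t) = Q_{s+1,k}(t) + (t+y_k)·Q_{s,k−1}(t)` for `1 ≤ s ≤ m`,
`2 ≤ k ≤ n`. -/
theorem stmt11 (m n s k : ℕ) (hs : 1 ≤ s) (hsm : s ≤ m) (hk : 2 ≤ k) (hkn : k ≤ n)
    (Q₁ Q₂ Q₃ : Polynomial K)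
    (hdeg₁ : Q₁.degree < (k : ℕ))
    (hQ₁ : (∏ j ∈ Finset.Icc 1 k, (Polynomial.X + Polynomial.C (Y j))) ∣
        Q₁ * (∏ j ∈ Finset.Icc s m, (Polynomial.C (X j) - Polynomial.X)) - 1)
    (hdeg₂ : Q₂.degree < (k : ℕ))
    (hQ₂ : (∏ j ∈ Finset.Icc 1 k, (Polynomial.X + Polynomial.C (Y j))) ∣
        Q₂ * (∏ j ∈ Finset.Icc (s + 1) m, (Polynomial.C (X j) - Polynomial.X)) - 1)
    (hdeg₃ : Q₃.degree < ((k - 1 : ℕ) : ℕ))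
    (hQ₃ : (∏ j ∈ Finset.Icc 1 (k - 1), (Polynomial.X + Polynomial.C (Y j))) ∣
        Q₃ * (∏ j ∈ Finset.Icc s m, (Polynomial.C (X j) - Polynomial.X)) - 1) :
    Polynomial.C (X s + Y k) * Q₁ = Q₂ + (Polynomial.X + Polynomial.C (Y k)) * Q₃ := by
  classical
  set Pk := ∏ j ∈ Finset.Icc 1 k, (Polynomial.X + Polynomial.C (Y j)) with hPk
  set Pk1 := ∏ j ∈ Finset.Icc 1 (k - 1), (Polynomial.X + Polynomial.C (Y j)) with hPk1
  set F := ∏ j ∈ Finset.Icc s m, (Polynomial.C (X j) - Polynomial.X) with hF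
  set F' := ∏ j ∈ Finset.Icc (s + 1) m, (Polynomial.C (X j) - Polynomial.X) with hF'
  set D := Polynomial.C (X s + Y k) * Q₁ - Q₂ - (Polynomial.X + Polynomial.C (Y k)) * Q₃
    with hD
  -- split Pk and F
  have hsplitP : Pk = Pk1 * (Polynomial.X + Polynomial.C (Y k)) := by
    rw [hPk, hPk1]
    have : k = (k - 1) + 1 := by omega
    rw [this, Finset.prod_Icc_succ_top (by omega)]
    congr 2
    all_goals omega
  have hsplitF : F = (Polynomial.C (X s) - Polynomial.X) * F' := by
    rw [hF, hF']
    have hins : Finset.Icc s m = insert s (Finset.Icc (s + 1) m) := by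
      ext a; simp [Finset.mem_Icc, Finset.mem_insert]; omega
    rw [hins, Finset.prod_insert (by simp)]
  -- Pk is monic of degree k
  have hmon : ∀ j ∈ Finset.Icc 1 k, (Polynomial.X + Polynomial.C (Y j)).Monic :=
    fun j _ => Polynomial.monic_X_add_C _
  have hPkmon : Pk.Monic := Polynomial.monic_prod_of_monic _ _ hmon
  have hPknd : Pk.natDegree = k := by
    rw [hPk, Polynomial.natDegree_prod_of_monic _ _ hmon]
    simp [Polynomial.natDegree_X_add_C]
  have hPkdeg : Pk.degree = (k : ℕ) := by
    rw [Polynomial.degree_eq_natDegree hPkmon.ne_zero, hPknd]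
  -- divisibility of D * F
  have hdvd3 : Pk ∣ (Polynomial.X + Polynomial.C (Y k)) * (Q₃ * F - 1) := by
    rw [hsplitP, mul_comm Pk1]
    exact mul_dvd_mul_left _ hQ₃
  have key : Pk ∣ D * F := by
    have e : D * F = Polynomial.C (X s + Y k) * (Q₁ * F - 1)
        - (Polynomial.C (X s) - Polynomial.X) * (Q₂ * F' - 1)
        - (Polynomial.X + Polynomial.C (Y k)) * (Q₃ * F - 1) := by
      rw [hD, hsplitF, Polynomial.C_add]
      ring
    rw [e]
    exact dvd_sub (dvd_sub (hQ₁.mul_left _) (hQ₂.mul_left _)) hdvd3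
  have hDdvd : Pk ∣ D := by
    have e : D = Q₁ * (D * F) - D * (Q₁ * F - 1) := by ring
    rw [e]
    exact dvd_sub (key.mul_left _) (hQ₁.mul_left _)
  -- degree bound
  have hd3 : ((Polynomial.X + Polynomial.C (Y k)) * Q₃).degree < ((k : ℕ) : WithBot ℕ) := by
    rcases eq_or_ne Q₃ 0 with h | h
    · simp only [h, mul_zero, Polynomial.degree_zero]
      exact WithBot.bot_lt_coe _
    · rw [Polynomial.degree_mul, Polynomial.degree_X_add_C]
      have : Q₃.degree < ((k - 1 : ℕ) : WithBot ℕ) := hdeg₃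
      have h2 : (1 : WithBot ℕ) + Q₃.degree < 1 + ((k - 1 : ℕ) : WithBot ℕ) :=
        WithBot.add_lt_add_left (by simp) this
      calc (1 : WithBot ℕ) + Q₃.degree < 1 + ((k - 1 : ℕ) : WithBot ℕ) := h2
        _ = ((1 + (k - 1) : ℕ) : WithBot ℕ) := by push_cast; ring
        _ = (k : ℕ) := by norm_cast; omega
  have hDdeg : D.degree < (k : ℕ) := by
    rw [hD]
    refine lt_of_le_of_lt (Polynomial.degree_sub_le _ _) (max_lt ?_ hd3)
    refine lt_of_le_of_lt (Polynomial.degree_sub_le _ _) (max_lt ?_ hdeg₂)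
    refine lt_of_le_of_lt (le_trans (Polynomial.degree_mul_le _ _) ?_) hdeg₁
    calc (Polynomial.C (X s + Y k)).degree + Q₁.degree
        ≤ 0 + Q₁.degree := add_le_add Polynomial.degree_C_le le_rfl
      _ = Q₁.degree := by rw [zero_add]
  have hD0 : D = 0 := Polynomial.eq_zero_of_dvd_of_degree_lt hDdvd (hPkdeg ▸ hDdeg)
  rw [hD] at hD0
  linear_combination hD0
end
end
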